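/- Perturbation bound for pseudoinverses: if A, B ∈ ℝ^{m×n} both have full column rank, then ‖A† − B†‖ ≤ √2 ‖A†‖ ‖B†‖ ‖A − B‖, where † denotes Moore–Penrose pseudoinverse and ‖·‖ the spectral norm. -/

import Mathlib

open Matrix
open scoped RealInnerProductSpace

/-- The spectral (operator 2-) norm of a real rectangular matrix. -/
noncomputable def matSpectralNorm {m n : ℕ} (A : Matrix (Fin m) (Fin n) ℝ) : ℝ :=
  ‖LinearMap.toContinuousLinearMap (Matrix.toEuclideanLin A)‖

/-- The Moore–Penrose pseudoinverse of a full column rank matrix. -/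
noncomputable def pinv {m n : ℕ} (F : Matrix (Fin m) (Fin n) ℝ) :
    Matrix (Fin n) (Fin m) ℝ :=
  (Fᵀ * F)⁻¹ * Fᵀ

noncomputable def LCLM {m n : ℕ} (A : Matrix (Fin m) (Fin n) ℝ) :
    EuclideanSpace ℝ (Fin n) →L[ℝ] EuclideanSpace ℝ (Fin m) :=
  LinearMap.toContinuousLinearMap (Matrix.toEuclideanLin A)

lemma spectralNorm_eq {m n : ℕ} (A : Matrix (Fin m) (Fin n) ℝ) :
    matSpectralNorm A = ‖LCLM A‖ := rfl

lemma LCLM_mul {m n k : ℕ} (A : Matrix (Fin m) (Fin n) ℝ) (B : Matrix (Fin n) (Fin k) ℝ) :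
    LCLM (A * B) = (LCLM A).comp (LCLM B) := by
  ext x
  simp [LCLM, Matrix.toEuclideanLin_apply, Matrix.mulVec_mulVec]

lemma LCLM_adjoint {m n : ℕ} (A : Matrix (Fin m) (Fin n) ℝ) :
    LCLM Aᵀ = ContinuousLinearMap.adjoint (LCLM A) := by
  rw [LCLM, ← Matrix.conjTranspose_eq_transpose_of_trivial,
    Matrix.toEuclideanLin_conjTranspose_eq_adjoint,
    LinearMap.adjoint_toContinuousLinearMap]
  rfl

lemma norm_LCLM_transpose {m n : ℕ} (A : Matrix (Fin m) (Fin n) ℝ) :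
    ‖LCLM Aᵀ‖ = ‖LCLM A‖ := by
  rw [LCLM_adjoint]
  exact (ContinuousLinearMap.adjoint : _ ≃ₗᵢ⋆[ℝ] _).norm_map _

lemma LCLM_sub {m n : ℕ} (A B : Matrix (Fin m) (Fin n) ℝ) :
    LCLM (A - B) = LCLM A - LCLM B := by
  ext x; simp [LCLM]

lemma LCLM_neg {m n : ℕ} (A : Matrix (Fin m) (Fin n) ℝ) :
    LCLM (-A) = -LCLM A := by
  ext x; simp [LCLM]

lemma norm_LCLM_mul_le {m n k : ℕ} (A : Matrix (Fin m) (Fin n) ℝ)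
    (B : Matrix (Fin n) (Fin k) ℝ) :
    ‖LCLM (A * B)‖ ≤ ‖LCLM A‖ * ‖LCLM B‖ := by
  rw [LCLM_mul]; exact ContinuousLinearMap.opNorm_comp_le _ _

lemma spectralNorm_sub_comm {m n : ℕ} (A B : Matrix (Fin m) (Fin n) ℝ) :
    matSpectralNorm (A - B) = matSpectralNorm (B - A) := by
  rw [spectralNorm_eq, spectralNorm_eq, (neg_sub B A).symm, LCLM_neg, norm_neg]

lemma isUnit_det_transpose_mul_self {m n : ℕ} (A : Matrix (Fin m) (Fin n) ℝ)
    (hA : A.rank = n) : IsUnit (Aᵀ * A).det := by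
  rw [← Matrix.isUnit_iff_isUnit_det, ← Matrix.mulVec_surjective_iff_isUnit]
  have hr : (Aᵀ * A).rank = n := by rw [Matrix.rank_transpose_mul_self, hA]
  have htop : LinearMap.range (Aᵀ * A).mulVecLin = ⊤ := by
    apply Submodule.eq_top_of_finrank_eq
    rw [← Matrix.rank, hr]
    simp [Module.finrank_pi]
  intro y
  have : y ∈ LinearMap.range (Aᵀ * A).mulVecLin := htop ▸ Submodule.mem_top
  obtain ⟨x, hx⟩ := this
  exact ⟨x, hx⟩

lemma pinv_mul_self {m n : ℕ} (B : Matrix (Fin m) (Fin n) ℝ)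
    (h : IsUnit (Bᵀ * B).det) : pinv B * B = 1 := by
  rw [pinv, Matrix.mul_assoc, Matrix.nonsing_inv_mul _ h]

lemma inv_gram_transpose {m n : ℕ} (A : Matrix (Fin m) (Fin n) ℝ) :
    ((Aᵀ * A)⁻¹)ᵀ = (Aᵀ * A)⁻¹ := by
  rw [Matrix.transpose_nonsing_inv, Matrix.transpose_mul, Matrix.transpose_transpose]

lemma norm_inv_gram {m n : ℕ} (A : Matrix (Fin m) (Fin n) ℝ)
    (h : IsUnit (Aᵀ * A).det) :
    ‖LCLM ((Aᵀ * A)⁻¹)‖ = ‖LCLM (pinv A)‖ ^ 2 := by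
  have key : pinv A * (pinv A)ᵀ = (Aᵀ * A)⁻¹ := by
    rw [pinv, Matrix.transpose_mul, inv_gram_transpose, Matrix.transpose_transpose,
      Matrix.mul_assoc, ← Matrix.mul_assoc Aᵀ A, Matrix.mul_nonsing_inv _ h, Matrix.mul_one]
  rw [← key, LCLM_mul, LCLM_adjoint]
  have h2 := ContinuousLinearMap.norm_adjoint_comp_self
    (ContinuousLinearMap.adjoint (LCLM (pinv A)))
  rw [ContinuousLinearMap.adjoint_adjoint] at h2
  rw [h2, (ContinuousLinearMap.adjoint : _ ≃ₗᵢ⋆[ℝ] _).norm_map, sq]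

lemma pinv_sub_identity {m n : ℕ} (A B : Matrix (Fin m) (Fin n) ℝ)
    (h1 : (Aᵀ * A)⁻¹ * (Aᵀ * A) = 1) (h2 : (Bᵀ * B) * (Bᵀ * B)⁻¹ = 1) :
    pinv A - pinv B = -(pinv A * (A - B) * pinv B)
      + (Aᵀ * A)⁻¹ * (A - B)ᵀ * (1 - B * pinv B) := by
  set G := (Aᵀ * A)⁻¹ with hG
  set H := (Bᵀ * B)⁻¹ with hH
  have c1 : G * Aᵀ * A * (H * Bᵀ) = H * Bᵀ := by
    rw [Matrix.mul_assoc G Aᵀ A, h1, Matrix.one_mul]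
  have c2 : G * Bᵀ * (B * (H * Bᵀ)) = G * Bᵀ := by
    rw [Matrix.mul_assoc G Bᵀ, ← Matrix.mul_assoc Bᵀ B, ← Matrix.mul_assoc (Bᵀ * B) H, h2,
      Matrix.one_mul]
  simp only [pinv, ← hG, ← hH, Matrix.transpose_sub, Matrix.sub_mul, Matrix.mul_sub,
    Matrix.mul_one]
  rw [c1, c2, Matrix.mul_assoc (G * Aᵀ) B (H * Bᵀ)]
  abel

lemma LCLM_add {m n : ℕ} (A B : Matrix (Fin m) (Fin n) ℝ) :
    LCLM (A + B) = LCLM A + LCLM B := by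
  ext x; simp [LCLM]

lemma LCLM_zero {m n : ℕ} : LCLM (0 : Matrix (Fin m) (Fin n) ℝ) = 0 := by
  ext x; simp [LCLM]

lemma proj_pythagoras {k : ℕ} (P : Matrix (Fin k) (Fin k) ℝ) (hPt : Pᵀ = P)
    (hPP : P * P = P) (x : EuclideanSpace ℝ (Fin k)) :
    ‖LCLM P x‖ ^ 2 + ‖x - LCLM P x‖ ^ 2 = ‖x‖ ^ 2 := by
  have hadj : ContinuousLinearMap.adjoint (LCLM P) = LCLM P := by
    rw [← LCLM_adjoint, hPt]
  have hzero : LCLM P (x - LCLM P x) = 0 := by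
    rw [map_sub, ← ContinuousLinearMap.comp_apply, ← LCLM_mul, hPP, sub_self]
  have horth : (inner ℝ (LCLM P x) (x - LCLM P x) : ℝ) = 0 := by
    nth_rewrite 1 [← hadj]
    rw [ContinuousLinearMap.adjoint_inner_left, hzero, inner_zero_right]
  have hx : LCLM P x + (x - LCLM P x) = x := by abel
  have := norm_add_sq_real (LCLM P x) (x - LCLM P x)
  rw [hx, horth] at this
  linarith

lemma cs2 (a b c d : ℝ) (ha : 0 ≤ a) (hb : 0 ≤ b) (hc : 0 ≤ c) (hd : 0 ≤ d) :
    a * c + b * d ≤ Real.sqrt (a ^ 2 + b ^ 2) * Real.sqrt (c ^ 2 + d ^ 2) := by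
  have h1 := Real.sq_sqrt (show (0:ℝ) ≤ a ^ 2 + b ^ 2 by positivity)
  have h2 := Real.sq_sqrt (show (0:ℝ) ≤ c ^ 2 + d ^ 2 by positivity)
  have h3 := Real.sqrt_nonneg (a ^ 2 + b ^ 2)
  have h4 := Real.sqrt_nonneg (c ^ 2 + d ^ 2)
  nlinarith [sq_nonneg (a * d - b * c), mul_nonneg h3 h4,
    sq_nonneg (Real.sqrt (a ^ 2 + b ^ 2) * Real.sqrt (c ^ 2 + d ^ 2) - (a * c + b * d)),
    sq_nonneg (Real.sqrt (a ^ 2 + b ^ 2) * Real.sqrt (c ^ 2 + d ^ 2) + (a * c + b * d))]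

lemma sqrt_bound (a b e : ℝ) (ha : 0 ≤ a) (hb : 0 ≤ b) (he : 0 ≤ e) (hab : a ≤ b) :
    Real.sqrt ((a * e * b) ^ 2 + (a ^ 2 * e) ^ 2) ≤ Real.sqrt 2 * a * b * e := by
  have h2 : Real.sqrt ((a * e * b) ^ 2 + (a ^ 2 * e) ^ 2)
      ≤ Real.sqrt (2 * (a * b * e) ^ 2) := by
    apply Real.sqrt_le_sqrt
    have hsq : a ^ 2 ≤ b ^ 2 := by nlinarith
    nlinarith [mul_le_mul_of_nonneg_right hsq (show (0:ℝ) ≤ a ^ 2 * e ^ 2 by positivity)]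
  refine h2.trans_eq ?_
  rw [Real.sqrt_mul (by norm_num : (0:ℝ) ≤ 2), Real.sqrt_sq (by positivity)]
  ring

lemma aux_bound {m n : ℕ} (A B : Matrix (Fin m) (Fin n) ℝ)
    (hA : A.rank = n) (hB : B.rank = n) :
    matSpectralNorm (pinv A - pinv B) ≤
      Real.sqrt ((matSpectralNorm (pinv A) * matSpectralNorm (A - B) * matSpectralNorm (pinv B)) ^ 2
        + (matSpectralNorm (pinv A) ^ 2 * matSpectralNorm (A - B)) ^ 2) := by
  have hdA := isUnit_det_transpose_mul_self A hA
  have hdB := isUnit_det_transpose_mul_self B hB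
  set P : Matrix (Fin m) (Fin m) ℝ := 1 - B * pinv B with hP
  have hQ : (B * pinv B)ᵀ = B * pinv B := by
    simp only [pinv, Matrix.transpose_mul, Matrix.transpose_transpose, inv_gram_transpose,
      Matrix.mul_assoc]
  have hPt : Pᵀ = P := by
    rw [hP, Matrix.transpose_sub, Matrix.transpose_one, hQ]
  have hQQ : (B * pinv B) * (B * pinv B) = B * pinv B := by
    rw [Matrix.mul_assoc B (pinv B), ← Matrix.mul_assoc (pinv B) B,
      pinv_mul_self B hdB, Matrix.one_mul]
  have hPP : P * P = P := by
    rw [hP]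
    simp only [Matrix.sub_mul, Matrix.mul_sub, Matrix.one_mul, Matrix.mul_one, hQQ]
    abel
  set T1 : Matrix (Fin n) (Fin m) ℝ := pinv A * (A - B) * pinv B with hT1
  set T2 : Matrix (Fin n) (Fin m) ℝ := (Aᵀ * A)⁻¹ * (A - B)ᵀ * P with hT2
  have hid : pinv A - pinv B = -T1 + T2 :=
    pinv_sub_identity A B (Matrix.nonsing_inv_mul _ hdA) (Matrix.mul_nonsing_inv _ hdB)
  have hT1P : T1 * P = 0 := by
    have hbp : pinv B * P = 0 := by
      rw [hP, Matrix.mul_sub, Matrix.mul_one, ← Matrix.mul_assoc,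
        pinv_mul_self B hdB, Matrix.one_mul, sub_self]
    rw [hT1, Matrix.mul_assoc (pinv A * (A - B)) (pinv B) P, hbp, Matrix.mul_zero]
  have hT2P : T2 * P = T2 := by
    rw [hT2, Matrix.mul_assoc ((Aᵀ * A)⁻¹ * (A - B)ᵀ) P P, hPP]
  set t1 := ‖LCLM T1‖ with ht1def
  set t2 := ‖LCLM T2‖ with ht2def
  -- operator norm bound via the vector estimate
  have key : ‖LCLM (pinv A - pinv B)‖ ≤ Real.sqrt (t1 ^ 2 + t2 ^ 2) := by
    apply ContinuousLinearMap.opNorm_le_bound _ (Real.sqrt_nonneg _)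
    intro x
    have hx1 : LCLM T1 x = LCLM T1 (x - LCLM P x) := by
      have h0 : LCLM T1 (LCLM P x) = 0 := by
        rw [← ContinuousLinearMap.comp_apply, ← LCLM_mul, hT1P, LCLM_zero,
          ContinuousLinearMap.zero_apply]
      rw [map_sub, h0, sub_zero]
    have hx2 : LCLM T2 x = LCLM T2 (LCLM P x) := by
      conv_lhs => rw [← hT2P]
      rw [LCLM_mul, ContinuousLinearMap.comp_apply]
    have hdecomp : LCLM (pinv A - pinv B) x = -(LCLM T1 (x - LCLM P x)) + LCLM T2 (LCLM P x) := by
      rw [hid, LCLM_add, LCLM_neg]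
      simp only [ContinuousLinearMap.add_apply, ContinuousLinearMap.neg_apply]
      rw [← hx1, ← hx2]
    have hpyth := proj_pythagoras P hPt hPP x
    have step1 : ‖LCLM (pinv A - pinv B) x‖
        ≤ ‖LCLM T1 (x - LCLM P x)‖ + ‖LCLM T2 (LCLM P x)‖ := by
      rw [hdecomp]
      refine (norm_add_le _ _).trans ?_
      rw [norm_neg]
    have step2 : ‖LCLM T1 (x - LCLM P x)‖ + ‖LCLM T2 (LCLM P x)‖
        ≤ t1 * ‖x - LCLM P x‖ + t2 * ‖LCLM P x‖ :=
      add_le_add (ContinuousLinearMap.le_opNorm _ _) (ContinuousLinearMap.le_opNorm _ _)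
    have step3 : t1 * ‖x - LCLM P x‖ + t2 * ‖LCLM P x‖
        ≤ Real.sqrt (t1 ^ 2 + t2 ^ 2) * Real.sqrt (‖x - LCLM P x‖ ^ 2 + ‖LCLM P x‖ ^ 2) :=
      cs2 _ _ _ _ (norm_nonneg _) (norm_nonneg _) (norm_nonneg _) (norm_nonneg _)
    have step4 : Real.sqrt (‖x - LCLM P x‖ ^ 2 + ‖LCLM P x‖ ^ 2) = ‖x‖ := by
      rw [show ‖x - LCLM P x‖ ^ 2 + ‖LCLM P x‖ ^ 2 = ‖x‖ ^ 2 by linarith,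
        Real.sqrt_sq (norm_nonneg _)]
    calc ‖LCLM (pinv A - pinv B) x‖
        ≤ t1 * ‖x - LCLM P x‖ + t2 * ‖LCLM P x‖ := step1.trans step2
      _ ≤ Real.sqrt (t1 ^ 2 + t2 ^ 2) * Real.sqrt (‖x - LCLM P x‖ ^ 2 + ‖LCLM P x‖ ^ 2) := step3
      _ = Real.sqrt (t1 ^ 2 + t2 ^ 2) * ‖x‖ := by rw [step4]
  -- bound t1 and t2 by products of spectral norms
  have hPle : ‖LCLM P‖ ≤ 1 := by
    apply ContinuousLinearMap.opNorm_le_bound _ zero_le_one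
    intro x
    have hpyth := proj_pythagoras P hPt hPP x
    rw [one_mul]
    nlinarith [norm_nonneg (LCLM P x), norm_nonneg x, sq_nonneg (‖x - LCLM P x‖)]
  have hT1le : t1 ≤ matSpectralNorm (pinv A) * matSpectralNorm (A - B) * matSpectralNorm (pinv B) := by
    rw [ht1def, hT1, spectralNorm_eq, spectralNorm_eq, spectralNorm_eq]
    calc ‖LCLM (pinv A * (A - B) * pinv B)‖
        ≤ ‖LCLM (pinv A * (A - B))‖ * ‖LCLM (pinv B)‖ := norm_LCLM_mul_le _ _
      _ ≤ ‖LCLM (pinv A)‖ * ‖LCLM (A - B)‖ * ‖LCLM (pinv B)‖ :=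
          mul_le_mul_of_nonneg_right (norm_LCLM_mul_le _ _) (norm_nonneg _)
  have hT2le : t2 ≤ matSpectralNorm (pinv A) ^ 2 * matSpectralNorm (A - B) := by
    rw [ht2def, hT2, spectralNorm_eq, spectralNorm_eq]
    calc ‖LCLM ((Aᵀ * A)⁻¹ * (A - B)ᵀ * P)‖
        ≤ ‖LCLM ((Aᵀ * A)⁻¹ * (A - B)ᵀ)‖ * ‖LCLM P‖ := norm_LCLM_mul_le _ _
      _ ≤ ‖LCLM ((Aᵀ * A)⁻¹ * (A - B)ᵀ)‖ * 1 :=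
          mul_le_mul_of_nonneg_left hPle (norm_nonneg _)
      _ = ‖LCLM ((Aᵀ * A)⁻¹ * (A - B)ᵀ)‖ := mul_one _
      _ ≤ ‖LCLM ((Aᵀ * A)⁻¹)‖ * ‖LCLM ((A - B)ᵀ)‖ := norm_LCLM_mul_le _ _
      _ = ‖LCLM (pinv A)‖ ^ 2 * ‖LCLM (A - B)‖ := by
          rw [norm_inv_gram A hdA, norm_LCLM_transpose]
  rw [spectralNorm_eq]
  refine key.trans ?_
  apply Real.sqrt_le_sqrt
  have h1 : (0:ℝ) ≤ t1 := norm_nonneg _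
  have h2 : (0:ℝ) ≤ t2 := norm_nonneg _
  nlinarith [hT1le, hT2le, h1, h2]

/-- Wedin-type perturbation bound for pseudoinverses of full column rank matrices:
`‖A† − B†‖ ≤ √2 ‖A†‖ ‖B†‖ ‖A − B‖`. -/
theorem stmt_15 {m n : ℕ} (A B : Matrix (Fin m) (Fin n) ℝ)
    (hA : A.rank = n) (hB : B.rank = n) :
    matSpectralNorm (pinv A - pinv B)
      ≤ Real.sqrt 2 * matSpectralNorm (pinv A) * matSpectralNorm (pinv B)
        * matSpectralNorm (A - B) := by
  have ha : 0 ≤ matSpectralNorm (pinv A) := by rw [spectralNorm_eq]; exact norm_nonneg _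
  have hb : 0 ≤ matSpectralNorm (pinv B) := by rw [spectralNorm_eq]; exact norm_nonneg _
  have he : 0 ≤ matSpectralNorm (A - B) := by rw [spectralNorm_eq]; exact norm_nonneg _
  rcases le_total (matSpectralNorm (pinv A)) (matSpectralNorm (pinv B)) with h | h
  · refine (aux_bound A B hA hB).trans ?_
    refine (sqrt_bound _ _ _ ha hb he h).trans_eq ?_
    ring
  · rw [spectralNorm_sub_comm (pinv A) (pinv B)]
    refine (aux_bound B A hB hA).trans ?_
    rw [spectralNorm_sub_comm B A]
    refine (sqrt_bound _ _ _ hb ha he h).trans_eq ?_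
    ring
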